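/- Let (V,E) be a directed tree, λ and μ weights on V, and 1 < p < ∞ with conjugate exponent p*. The weighted backward shift B_λ is a bounded operator on ℓ^p(V,μ) if and only if sup_{v∈V} |μ_v|^{p*} ∑_{u∈Chi(v)} |λ_u/μ_u|^{p*} < ∞. In that case ‖B_λ‖ = sup_{v∈V} |μ_v| (∑_{u∈Chi(v)} |λ_u/μ_u|^{p*})^{1/p*}. -/

import Mathlib

open scoped ENNReal
open Filter

/-- Iterated parent map of a partially defined parent function. -/
def parIter {V : Type*} (par : V → Option V) : ℕ → V → Option V
  | 0, v => some v
  | n + 1, v => (par v).bind (parIter par n)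

/-- A directed tree: each vertex has at most one parent (the map `par`),
the graph is connected (any two vertices have a common ancestor), and has no cycles. -/
structure DirTree (V : Type*) : Type _ where
  par : V → Option V
  connected : ∀ u v : V, ∃ m n : ℕ, ∃ w : V,
    parIter par m u = some w ∧ parIter par n v = some w
  acyclic : ∀ (v : V) (n : ℕ), parIter par (n + 1) v ≠ some v

namespace DirTree

variable {V : Type*} (t : DirTree V)

/-- The set of children of a vertex. -/
def children (v : V) : Set V := {u | t.par u = some v}

/-- `desc n v` is `Chi^n(v)`, the set of `n`-th generation descendants of `v`. -/
def desc (n : ℕ) (v : V) : Set V := {u | parIter t.par n u = some v}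

def IsRoot (v : V) : Prop := t.par v = none

def Rooted : Prop := ∃ v, t.IsRoot v

def Unrooted : Prop := ∀ v : V, t.par v ≠ none

/-- The tree has no leaves: every vertex has a child. -/
def Leafless : Prop := ∀ v : V, ∃ u, t.par u = some v

variable {𝕂 : Type*} [RCLike 𝕂]

/-- The weighted backward shift `B_λ`: `(B_λ f)(v) = ∑_{u ∈ Chi(v)} λ_u f(u)`. -/
noncomputable def bshift (lam : V → 𝕂) (f : V → 𝕂) : V → 𝕂 :=
  fun v => ∑' u : t.children v, lam u * f u

/-- The weighted forward shift `S_λ`: `(S_λ f)(v) = λ_v f(par v)` for `v ≠ root`, `0` at the root. -/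
noncomputable def fshift (lam : V → 𝕂) (f : V → 𝕂) : V → 𝕂 :=
  fun v => (t.par v).elim 0 (fun w => lam v * f w)

/-- `wprod lam n u = λ(par^n(u) → u)`, the product of the weights along the branch
from `par^n(u)` down to `u`. -/
noncomputable def wprod (lam : V → 𝕂) (n : ℕ) (u : V) : 𝕂 :=
  ∏ k ∈ Finset.range n, ((parIter t.par k u).elim 1 lam)

end DirTree

/-- The `ℓ^p(V,μ)`-norm (with values in `ℝ≥0∞`): for `p = ∞` the weighted sup norm,
otherwise `(∑_v ‖f(v) μ_v‖^p)^{1/p}`. -/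
noncomputable def enormW {V 𝕂 : Type*} [RCLike 𝕂] (μ : V → 𝕂) (p : ℝ≥0∞) (f : V → 𝕂) :
    ℝ≥0∞ :=
  if p = ∞ then ⨆ v, (‖μ v * f v‖₊ : ℝ≥0∞)
  else (∑' v, (‖μ v * f v‖₊ : ℝ≥0∞) ^ p.toReal) ^ (1 / p.toReal)

/-- Membership in `ℓ^p(V,μ)`. -/
def MemWLp {V 𝕂 : Type*} [RCLike 𝕂] (μ : V → 𝕂) (p : ℝ≥0∞) (f : V → 𝕂) : Prop :=
  enormW μ p f ≠ ∞

/-- Membership in `c₀(V,μ)`: the weighted function vanishes at infinity. -/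
def MemC0 {V 𝕂 : Type*} [RCLike 𝕂] (μ : V → 𝕂) (f : V → 𝕂) : Prop :=
  Tendsto (fun v => ‖μ v * f v‖) cofinite (nhds 0)

/-- `T` is a bounded operator with respect to the norm `nrm`. -/
def BoundedOn {V 𝕂 : Type*} [RCLike 𝕂] (T : (V → 𝕂) → (V → 𝕂))
    (nrm : (V → 𝕂) → ℝ≥0∞) : Prop :=
  ∃ C : ℝ≥0∞, C ≠ ∞ ∧ ∀ f, nrm (T f) ≤ C * nrm f

/-- The operator norm of `T` with respect to the norm `nrm`. -/
noncomputable def opNorm {V 𝕂 : Type*} [RCLike 𝕂] (T : (V → 𝕂) → (V → 𝕂))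
    (nrm : (V → 𝕂) → ℝ≥0∞) : ℝ≥0∞ :=
  sInf {C : ℝ≥0∞ | ∀ f, nrm (T f) ≤ C * nrm f}

/-- `T` is hypercyclic on the space `{f | mem f}` with metric induced by `nrm`:
some `f` in the space has dense orbit. -/
def HypercyclicOn {V 𝕂 : Type*} [RCLike 𝕂] (T : (V → 𝕂) → (V → 𝕂))
    (mem : (V → 𝕂) → Prop) (nrm : (V → 𝕂) → ℝ≥0∞) : Prop :=
  ∃ f, mem f ∧ ∀ g, mem g → ∀ ε : ℝ≥0∞, 0 < ε → ∃ n : ℕ, nrm (T^[n] f - g) < ε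

/-- `T` is weakly mixing: `T ⊕ T` is hypercyclic on the product. -/
def WeaklyMixingOn {V 𝕂 : Type*} [RCLike 𝕂] (T : (V → 𝕂) → (V → 𝕂))
    (mem : (V → 𝕂) → Prop) (nrm : (V → 𝕂) → ℝ≥0∞) : Prop :=
  ∃ f₁ f₂, mem f₁ ∧ mem f₂ ∧ ∀ g₁ g₂, mem g₁ → mem g₂ → ∀ ε : ℝ≥0∞, 0 < ε →
    ∃ n : ℕ, nrm (T^[n] f₁ - g₁) < ε ∧ nrm (T^[n] f₂ - g₂) < ε

/-- `T` is (topologically) mixing on the space `{f | mem f}`. -/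
def MixingOn {V 𝕂 : Type*} [RCLike 𝕂] (T : (V → 𝕂) → (V → 𝕂))
    (mem : (V → 𝕂) → Prop) (nrm : (V → 𝕂) → ℝ≥0∞) : Prop :=
  ∀ f g, mem f → mem g → ∀ ε : ℝ≥0∞, 0 < ε →
    ∃ N : ℕ, ∀ n ≥ N, ∃ h, mem h ∧ nrm (h - f) < ε ∧ nrm (T^[n] h - g) < ε



lemma tsumHolder {ι : Type*} {p q : ℝ} (hpq : Real.HolderConjugate p q) (f g : ι → ℝ≥0∞) :
    ∑' i, f i * g i ≤ (∑' i, f i ^ p) ^ (1 / p) * (∑' i, g i ^ q) ^ (1 / q) := by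
  letI : MeasurableSpace ι := ⊤
  haveI : MeasurableSingletonClass ι := ⟨fun _ => trivial⟩
  have hf : Measurable f := fun _ _ => trivial
  have hg : Measurable g := fun _ _ => trivial
  have := ENNReal.lintegral_mul_le_Lp_mul_Lq (MeasureTheory.Measure.count (α := ι)) hpq
    hf.aemeasurable hg.aemeasurable
  simpa [MeasureTheory.lintegral_count, Pi.mul_apply] using this

lemma enormTsumLe {ι : Type*} {E : Type*} [NormedAddCommGroup E] [CompleteSpace E]
    (f : ι → E) : (‖∑' i, f i‖₊ : ℝ≥0∞) ≤ ∑' i, (‖f i‖₊ : ℝ≥0∞) := by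
  by_cases h : ∑' i, (‖f i‖₊ : ℝ≥0∞) = ∞
  · simp [h]
  · have hs : Summable fun i => ‖f i‖₊ := by
      rwa [← ENNReal.tsum_coe_ne_top_iff_summable]
    rw [← ENNReal.coe_tsum hs]
    exact_mod_cast nnnorm_tsum_le hs
lemma auxUpper {V : Type*} [Countable V] {𝕂 : Type*} [RCLike 𝕂] (t : DirTree V)
    (lam μ : V → 𝕂) (hμ : ∀ v, μ v ≠ 0) {pr q : ℝ} (hpq : Real.HolderConjugate pr q)
    (f : V → 𝕂) :
    ∑' v, (‖μ v * t.bshift lam f v‖₊ : ℝ≥0∞) ^ pr ≤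
      (⨆ v : V, (‖μ v‖₊ : ℝ≥0∞) *
          (∑' u : t.children v, ((‖lam u.1‖₊ : ℝ≥0∞) * (‖μ u.1‖₊ : ℝ≥0∞)⁻¹) ^ q) ^ (1 / q)) ^ pr
        * ∑' v, (‖μ v * f v‖₊ : ℝ≥0∞) ^ pr := by
  set A : V → ℝ≥0∞ := fun v =>
    ∑' u : t.children v, ((‖lam u.1‖₊ : ℝ≥0∞) * (‖μ u.1‖₊ : ℝ≥0∞)⁻¹) ^ q with hA
  set N : ℝ≥0∞ := ⨆ v : V, (‖μ v‖₊ : ℝ≥0∞) * (A v) ^ (1 / q) with hN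
  set G : V → ℝ≥0∞ := fun u => (‖μ u * f u‖₊ : ℝ≥0∞) ^ pr with hG
  have hprpos : 0 < pr := hpq.pos
  -- pointwise estimate
  have key : ∀ v : V, (‖μ v * t.bshift lam f v‖₊ : ℝ≥0∞) ^ pr ≤
      N ^ pr * ∑' u : t.children v, G u.1 := by
    intro v
    have h1 : (‖μ v * t.bshift lam f v‖₊ : ℝ≥0∞) ≤
        (‖μ v‖₊ : ℝ≥0∞) * ∑' u : t.children v, (‖lam u.1 * f u.1‖₊ : ℝ≥0∞) := by
      rw [nnnorm_mul, ENNReal.coe_mul]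
      exact mul_le_mul_right (enormTsumLe _) _
    have h2 : ∀ u : t.children v, (‖lam u.1 * f u.1‖₊ : ℝ≥0∞) =
        ((‖lam u.1‖₊ : ℝ≥0∞) * (‖μ u.1‖₊ : ℝ≥0∞)⁻¹) * (‖μ u.1 * f u.1‖₊ : ℝ≥0∞) := by
      intro u
      have hm0 : (‖μ u.1‖₊ : ℝ≥0∞) ≠ 0 := by
        simpa using hμ u.1
      have hmt : (‖μ u.1‖₊ : ℝ≥0∞) ≠ ∞ := ENNReal.coe_ne_top
      rw [nnnorm_mul, nnnorm_mul, ENNReal.coe_mul, ENNReal.coe_mul]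
      rw [mul_assoc, ← mul_assoc ((‖μ u.1‖₊ : ℝ≥0∞)⁻¹), ENNReal.inv_mul_cancel hm0 hmt, one_mul]
    have h3 : ∑' u : t.children v, (‖lam u.1 * f u.1‖₊ : ℝ≥0∞) ≤
        (A v) ^ (1 / q) * (∑' u : t.children v, G u.1) ^ (1 / pr) := by
      calc ∑' u : t.children v, (‖lam u.1 * f u.1‖₊ : ℝ≥0∞)
          = ∑' u : t.children v,
            ((‖lam u.1‖₊ : ℝ≥0∞) * (‖μ u.1‖₊ : ℝ≥0∞)⁻¹) * (‖μ u.1 * f u.1‖₊ : ℝ≥0∞) :=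
            tsum_congr h2
        _ ≤ _ := tsumHolder hpq.symm _ _
    calc (‖μ v * t.bshift lam f v‖₊ : ℝ≥0∞) ^ pr
        ≤ ((‖μ v‖₊ : ℝ≥0∞) * ((A v) ^ (1 / q) * (∑' u : t.children v, G u.1) ^ (1 / pr))) ^ pr :=
          ENNReal.rpow_le_rpow (h1.trans (mul_le_mul_right h3 _)) hprpos.le
      _ = ((‖μ v‖₊ : ℝ≥0∞) * (A v) ^ (1 / q)) ^ pr * ((∑' u : t.children v, G u.1) ^ (1 / pr)) ^ pr := by
          rw [← mul_assoc, ENNReal.mul_rpow_of_nonneg _ _ hprpos.le]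
      _ = ((‖μ v‖₊ : ℝ≥0∞) * (A v) ^ (1 / q)) ^ pr * ∑' u : t.children v, G u.1 := by
          rw [← ENNReal.rpow_mul, one_div_mul_cancel hprpos.ne', ENNReal.rpow_one]
      _ ≤ N ^ pr * ∑' u : t.children v, G u.1 := by
          gcongr
          exact le_iSup (fun v => (‖μ v‖₊ : ℝ≥0∞) * (A v) ^ (1 / q)) v
  calc ∑' v, (‖μ v * t.bshift lam f v‖₊ : ℝ≥0∞) ^ pr
      ≤ ∑' v, N ^ pr * ∑' u : t.children v, G u.1 := ENNReal.tsum_le_tsum key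
    _ = N ^ pr * ∑' v, ∑' u : t.children v, G u.1 := ENNReal.tsum_mul_left
    _ ≤ N ^ pr * ∑' u : V, G u := by
        refine mul_le_mul_right ?_ _
        rw [← ENNReal.tsum_sigma' (fun x : Σ v : V, t.children v => G x.2.1)]
        refine ENNReal.tsum_comp_le_tsum_of_injective ?_ G
          (f := fun x : Σ v : V, t.children v => x.2.1)
        rintro ⟨v1, u1, h1⟩ ⟨v2, u2, h2⟩ h
        simp only at h
        have : v1 = v2 := by
          have e1 : t.par u1 = some v1 := h1
          have e2 : t.par u2 = some v2 := h2
          rw [h] at e1; rw [e2] at e1; exact (Option.some_injective V e1).symm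
        subst this
        simp only [Sigma.mk.inj_iff, heq_eq_eq, true_and]
        exact Subtype.ext h


lemma ofRealBridge {a b : ℝ} (ha : 0 < a) (hb : 0 < b) (s : ℝ) :
    ENNReal.ofReal (a ^ s * b ^ (-s)) = (ENNReal.ofReal a * (ENNReal.ofReal b)⁻¹) ^ s := by
  rw [← ENNReal.ofReal_inv_of_pos hb, ← ENNReal.ofReal_mul ha.le,
    ENNReal.ofReal_rpow_of_pos (by positivity)]
  congr 1
  rw [Real.mul_rpow ha.le (inv_nonneg.2 hb.le), Real.inv_rpow hb.le, ← Real.rpow_neg hb.le]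

lemma ofReal_norm_eq_coe_nnnorm {E : Type*} [SeminormedAddCommGroup E] (a : E) :
    ENNReal.ofReal ‖a‖ = (‖a‖₊ : ℝ≥0∞) :=
  ENNReal.ofReal_eq_coe_nnreal _

lemma auxLower {V : Type*} [Countable V] {𝕂 : Type*} [RCLike 𝕂] (t : DirTree V)
    (lam μ : V → 𝕂) (hlam : ∀ v, lam v ≠ 0) (hμ : ∀ v, μ v ≠ 0)
    (p : ℝ≥0∞) (hp' : p ≠ ∞) {q : ℝ} (hpq : Real.HolderConjugate p.toReal q)
    {C : ℝ≥0∞} (hbd : ∀ f, enormW μ p (t.bshift lam f) ≤ C * enormW μ p f) (v : V) :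
    (‖μ v‖₊ : ℝ≥0∞) *
      (∑' u : t.children v, ((‖lam u.1‖₊ : ℝ≥0∞) * (‖μ u.1‖₊ : ℝ≥0∞)⁻¹) ^ q) ^ (1 / q) ≤ C := by
  classical
  set pr : ℝ := p.toReal with hprdef
  have hprpos : 0 < pr := hpq.pos
  have hq0 : 0 < q := hpq.symm.pos
  set e : V → ℝ≥0∞ := fun u => (‖lam u‖₊ : ℝ≥0∞) * (‖μ u‖₊ : ℝ≥0∞)⁻¹ with he
  have hmu0 : ∀ u : V, (‖μ u‖₊ : ℝ≥0∞) ≠ 0 := fun u => by simpa using hμ u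
  have he0 : ∀ u : V, e u ≠ 0 := fun u => by
    simp only [he, mul_ne_zero_iff, ENNReal.inv_ne_zero]
    exact ⟨by simpa using hlam u, ENNReal.coe_ne_top⟩
  have het : ∀ u : V, e u ≠ ∞ := fun u => by
    simp only [he]
    exact ENNReal.mul_ne_top ENNReal.coe_ne_top (by simp [hmu0 u])
  set m : ℝ≥0∞ := (‖μ v‖₊ : ℝ≥0∞) with hm
  have hm0 : m ≠ 0 := hmu0 v
  have hmt : m ≠ ∞ := ENNReal.coe_ne_top
  suffices hAle : (∑' u : t.children v, e u.1 ^ q) ≤ (m⁻¹ * C) ^ q by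
    calc m * (∑' u : t.children v, e u.1 ^ q) ^ (1 / q)
        ≤ m * (((m⁻¹ * C) ^ q) ^ (1 / q)) :=
          mul_le_mul_right (ENNReal.rpow_le_rpow hAle (by positivity)) _
      _ = m * (m⁻¹ * C) := by
          rw [one_div, ENNReal.rpow_rpow_inv hq0.ne']
      _ = (m * m⁻¹) * C := by rw [← mul_assoc]
      _ = C := by rw [ENNReal.mul_inv_cancel hm0 hmt, one_mul]
  rw [ENNReal.tsum_eq_iSup_sum]
  refine iSup_le fun F => ?_
  -- the test function
  set c : V → 𝕂 := fun u =>
    (starRingEnd 𝕂) (lam u) * ((‖lam u‖ ^ (q - 2) * ‖μ u‖ ^ (-q) : ℝ) : 𝕂) with hc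
  set g : V → 𝕂 := fun u =>
    if h : u ∈ t.children v then (if (⟨u, h⟩ : t.children v) ∈ F then c u else 0) else 0
    with hg
  set T : ℝ≥0∞ := ∑ u ∈ F, e u.1 ^ q with hT
  have hTt : T ≠ ∞ := by
    rw [hT]
    exact (ENNReal.sum_lt_top.2 fun u _ =>
      ENNReal.rpow_lt_top_of_nonneg hq0.le (het u.1)).ne
  have hgF : ∀ u : t.children v, u ∈ F → g u.1 = c u.1 := by
    intro u hu
    simp only [hg]
    rw [dif_pos u.2, Subtype.coe_eta, if_pos hu]
  have hgF' : ∀ u : t.children v, u ∉ F → g u.1 = 0 := by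
    intro u hu
    simp only [hg]
    rw [dif_pos u.2, Subtype.coe_eta, if_neg hu]
  have hlampos : ∀ u : V, (0:ℝ) < ‖lam u‖ := fun u => norm_pos_iff.2 (hlam u)
  have hmupos : ∀ u : V, (0:ℝ) < ‖μ u‖ := fun u => norm_pos_iff.2 (hμ u)
  -- norm of μ u * c u
  have hnormc : ∀ u : V, (‖μ u * c u‖₊ : ℝ≥0∞) = e u ^ (q - 1) := by
    intro u
    rw [← ofReal_norm_eq_coe_nnnorm]
    have h1 : ‖μ u * c u‖ = ‖μ u‖ * (‖lam u‖ * (‖lam u‖ ^ (q - 2) * ‖μ u‖ ^ (-q))) := by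
      rw [hc]
      simp only [norm_mul, RCLike.norm_conj, RCLike.norm_ofReal]
      rw [abs_of_nonneg (by positivity)]
    have h2 : ‖μ u‖ * (‖lam u‖ * (‖lam u‖ ^ (q - 2) * ‖μ u‖ ^ (-q)))
        = ‖lam u‖ ^ (q - 1) * ‖μ u‖ ^ (-(q - 1)) := by
      have e1 : ‖lam u‖ * ‖lam u‖ ^ (q - 2) = ‖lam u‖ ^ (q - 1) := by
        nth_rewrite 1 [← Real.rpow_one (‖lam u‖)]
        rw [← Real.rpow_add (hlampos u)]
        ring_nf
      have e2 : ‖μ u‖ * ‖μ u‖ ^ (-q) = ‖μ u‖ ^ (-(q - 1)) := by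
        nth_rewrite 1 [← Real.rpow_one (‖μ u‖)]
        rw [← Real.rpow_add (hmupos u)]
        ring_nf
      calc ‖μ u‖ * (‖lam u‖ * (‖lam u‖ ^ (q - 2) * ‖μ u‖ ^ (-q)))
          = (‖lam u‖ * ‖lam u‖ ^ (q - 2)) * (‖μ u‖ * ‖μ u‖ ^ (-q)) := by ring
        _ = _ := by rw [e1, e2]
    rw [h1, h2, ofRealBridge (hlampos u) (hmupos u),
      ofReal_norm_eq_coe_nnnorm, ofReal_norm_eq_coe_nnnorm]
  -- value of the shift at v
  have hlamc : ∀ u : V, lam u * c u = ((‖lam u‖ ^ q * ‖μ u‖ ^ (-q) : ℝ) : 𝕂) := by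
    intro u
    rw [hc, ← mul_assoc, RCLike.mul_conj, ← RCLike.ofReal_pow, ← RCLike.ofReal_mul]
    congr 1
    rw [← Real.rpow_natCast (‖lam u‖) 2, ← mul_assoc, ← Real.rpow_add (hlampos u)]
    norm_num
  have hBg : t.bshift lam g v = ((∑ u ∈ F, (‖lam u.1‖ ^ q * ‖μ u.1‖ ^ (-q) : ℝ) : ℝ) : 𝕂) := by
    show (∑' u : t.children v, lam u.1 * g u.1) = _
    rw [tsum_eq_sum (s := F) (fun b hb => by rw [hgF' b hb, mul_zero])]
    rw [RCLike.ofReal_sum]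
    exact Finset.sum_congr rfl fun u hu => by rw [hgF u hu, hlamc]
  have hBreal : ENNReal.ofReal (∑ u ∈ F, (‖lam u.1‖ ^ q * ‖μ u.1‖ ^ (-q) : ℝ)) = T := by
    rw [ENNReal.ofReal_sum_of_nonneg (fun u _ => by positivity), hT]
    refine Finset.sum_congr rfl fun u _ => ?_
    rw [ofRealBridge (hlampos u.1) (hmupos u.1), ofReal_norm_eq_coe_nnnorm,
      ofReal_norm_eq_coe_nnnorm]
  have hnormBg : (‖μ v * t.bshift lam g v‖₊ : ℝ≥0∞) = m * T := by
    rw [nnnorm_mul, ENNReal.coe_mul, hBg]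
    congr 1
    rw [← ofReal_norm_eq_coe_nnnorm, RCLike.norm_ofReal,
      abs_of_nonneg (Finset.sum_nonneg fun u _ => by positivity), hBreal]
  -- the norm of g
  have hnormg : ∑' u : V, (‖μ u * g u‖₊ : ℝ≥0∞) ^ pr = T := by
    rw [tsum_eq_sum (s := F.image Subtype.val) ?side]
    case side =>
      intro b hb
      have hb0 : g b = 0 := by
        by_cases h : b ∈ t.children v
        · by_cases h2 : (⟨b, h⟩ : t.children v) ∈ F
          · exact absurd (Finset.mem_image.2 ⟨⟨b, h⟩, h2, rfl⟩ : b ∈ F.image Subtype.val) hb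
          · simp only [hg]; rw [dif_pos h, if_neg h2]
        · simp only [hg]; rw [dif_neg h]
      rw [hb0, mul_zero, nnnorm_zero, ENNReal.coe_zero,
        ENNReal.zero_rpow_of_pos hprpos]
    rw [Finset.sum_image (fun x _ y _ h => Subtype.ext h), hT]
    refine Finset.sum_congr rfl fun u hu => ?_
    rw [hgF u hu, hnormc, ← ENNReal.rpow_mul, hpq.symm.sub_one_mul_conj]
  -- apply the boundedness hypothesis to g
  have hkey : m * T ≤ C * T ^ (1 / pr) := by
    have h := hbd g
    simp only [enormW, if_neg hp', ← hprdef] at h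
    rw [hnormg] at h
    refine le_trans ?_ h
    have h0 : (m * T) ^ pr ≤ ∑' w, (‖μ w * t.bshift lam g w‖₊ : ℝ≥0∞) ^ pr := by
      refine le_trans (le_of_eq ?_) (ENNReal.le_tsum v)
      rw [hnormBg]
    calc m * T = ((m * T) ^ pr) ^ (1 / pr) := by
          rw [one_div, ENNReal.rpow_rpow_inv hprpos.ne']
      _ ≤ _ := ENNReal.rpow_le_rpow h0 (by positivity)
  -- conclude T ≤ (m⁻¹ * C) ^ q
  rcases eq_or_ne T 0 with hT0 | hT0
  · rw [hT0]; exact zero_le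
  have hTpr0 : T ^ (1 / pr) ≠ 0 := by
    simp [ENNReal.rpow_eq_zero_iff, hT0, hTt, hprpos, hprpos.not_gt, one_div]
  have hTprt : T ^ (1 / pr) ≠ ∞ := by
    exact (ENNReal.rpow_lt_top_of_nonneg (by positivity) hTt).ne
  have hTsplit : T * (T ^ (1 / pr))⁻¹ = T ^ (1 / q) := by
    rw [← ENNReal.rpow_neg]
    nth_rewrite 1 [← ENNReal.rpow_one T]
    rw [← ENNReal.rpow_add _ _ hT0 hTt]
    congr 1
    have h3 := hpq.symm.inv_add_inv_eq_one
    rw [one_div, one_div]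
    linarith
  have hstep : m * T ^ (1 / q) ≤ C := by
    have h2 := mul_le_mul_left hkey (T ^ (1 / pr))⁻¹
    rw [mul_assoc C, ENNReal.mul_inv_cancel hTpr0 hTprt, mul_one, mul_assoc, hTsplit] at h2
    exact h2
  have hfin : T ^ (1 / q) ≤ m⁻¹ * C := by
    have := mul_le_mul_right hstep m⁻¹
    rwa [← mul_assoc, ENNReal.inv_mul_cancel hm0 hmt, one_mul] at this
  calc T = (T ^ (1 / q)) ^ q := by rw [one_div, ENNReal.rpow_inv_rpow hq0.ne']
    _ ≤ (m⁻¹ * C) ^ q := ENNReal.rpow_le_rpow hfin hq0.le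


theorem stmt5 {V : Type*} [Countable V] {𝕂 : Type*} [RCLike 𝕂] (t : DirTree V)
    (lam μ : V → 𝕂) (hlam : ∀ v, lam v ≠ 0) (hμ : ∀ v, μ v ≠ 0)
    (p : ℝ≥0∞) (hp : 1 < p) (hp' : p ≠ ∞) (q : ℝ) (hpq : 1 / p.toReal + 1 / q = 1) :
    (BoundedOn (t.bshift lam) (enormW μ p) ↔
      (⨆ v : V, (‖μ v‖₊ : ℝ≥0∞) ^ q *
          ∑' u : t.children v, ((‖lam u.1‖₊ : ℝ≥0∞) * (‖μ u.1‖₊ : ℝ≥0∞)⁻¹) ^ q) ≠ ∞) ∧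
    (BoundedOn (t.bshift lam) (enormW μ p) →
      opNorm (t.bshift lam) (enormW μ p)
        = ⨆ v : V, (‖μ v‖₊ : ℝ≥0∞) *
            (∑' u : t.children v, ((‖lam u.1‖₊ : ℝ≥0∞) * (‖μ u.1‖₊ : ℝ≥0∞)⁻¹) ^ q)
              ^ (1 / q)) := by
  have hpr1 : 1 < p.toReal := by
    rw [← ENNReal.toReal_one]
    exact (ENNReal.toReal_lt_toReal ENNReal.one_ne_top hp').mpr hp
  have hpq' : Real.HolderConjugate p.toReal q := Real.holderConjugate_iff.2 ⟨hpr1, by simpa [one_div] using hpq⟩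
  have hq0 : 0 < q := hpq'.symm.pos
  set A : V → ℝ≥0∞ := fun v =>
    ∑' u : t.children v, ((‖lam u.1‖₊ : ℝ≥0∞) * (‖μ u.1‖₊ : ℝ≥0∞)⁻¹) ^ q with hA
  set N : ℝ≥0∞ := ⨆ v : V, (‖μ v‖₊ : ℝ≥0∞) * A v ^ (1 / q) with hN
  have hup : ∀ f, enormW μ p (t.bshift lam f) ≤ N * enormW μ p f := by
    intro f
    simp only [enormW, if_neg hp']
    calc (∑' v, (‖μ v * t.bshift lam f v‖₊ : ℝ≥0∞) ^ p.toReal) ^ (1 / p.toReal)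
        ≤ (N ^ p.toReal * ∑' v, (‖μ v * f v‖₊ : ℝ≥0∞) ^ p.toReal) ^ (1 / p.toReal) :=
          ENNReal.rpow_le_rpow (auxUpper t lam μ hμ hpq' f) (by positivity)
      _ = N * (∑' v, (‖μ v * f v‖₊ : ℝ≥0∞) ^ p.toReal) ^ (1 / p.toReal) := by
          rw [ENNReal.mul_rpow_of_nonneg _ _ (by positivity), one_div,
            ENNReal.rpow_rpow_inv hpq'.ne_zero]
  have hlow : ∀ C : ℝ≥0∞, (∀ f, enormW μ p (t.bshift lam f) ≤ C * enormW μ p f) → N ≤ C :=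
    fun C hC => iSup_le fun v => auxLower t lam μ hlam hμ p hp' hpq' hC v
  have hv : ∀ v : V, (‖μ v‖₊ : ℝ≥0∞) ^ q * A v = ((‖μ v‖₊ : ℝ≥0∞) * A v ^ (1 / q)) ^ q := by
    intro v
    rw [ENNReal.mul_rpow_of_nonneg _ _ hq0.le, one_div, ENNReal.rpow_inv_rpow hq0.ne']
  constructor
  · constructor
    · rintro ⟨C, hCt, hC⟩
      have hNt : N ≠ ∞ := ne_top_of_le_ne_top hCt (hlow C hC)
      refine ne_top_of_le_ne_top (ENNReal.rpow_lt_top_of_nonneg hq0.le hNt).ne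
        (iSup_le fun v => ?_)
      rw [hv v]
      exact ENNReal.rpow_le_rpow
        (le_iSup (fun v => (‖μ v‖₊ : ℝ≥0∞) * A v ^ (1 / q)) v) hq0.le
    · intro hS
      refine ⟨N, ?_, hup⟩
      have hle : N ≤ (⨆ v : V, (‖μ v‖₊ : ℝ≥0∞) ^ q * A v) ^ (1 / q) := by
        refine iSup_le fun v => ?_
        have : (‖μ v‖₊ : ℝ≥0∞) * A v ^ (1 / q)
            = ((‖μ v‖₊ : ℝ≥0∞) ^ q * A v) ^ (1 / q) := by
          rw [hv v, one_div, ENNReal.rpow_rpow_inv hq0.ne']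
        rw [this]
        exact ENNReal.rpow_le_rpow
          (le_iSup (fun v => (‖μ v‖₊ : ℝ≥0∞) ^ q * A v) v) (by positivity)
      exact ne_top_of_le_ne_top
        (ENNReal.rpow_lt_top_of_nonneg (by positivity) hS).ne hle
  · intro _
    refine le_antisymm (sInf_le hup) (le_sInf fun C hC => hlow C hC)
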